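/- Let G be a countably infinite cancellative semigroup and let (F_n) be a Følner sequence in G. Then the set of (F_n)-normal elements of {0,1}^G is meagre (of first Baire category) in {0,1}^G, where {0,1} carries the discrete topology and {0,1}^G the product topology. -/

import Mathlib

open Filter

/- `(F n)` is a (left) Følner sequence in the semigroup `G`. -/
open scoped Classical in
def IsFolner {G : Type*} [Mul G] (F : ℕ → Finset G) : Prop :=
  (∀ n, (F n).Nonempty) ∧
  ∀ g : G, Tendsto
    (fun n => (((F n).filter (fun h => g * h ∈ F n)).card : ℝ) / (F n).card)
    atTop (nhds 1)

/- `x : G → {0,1}` is `(F n)`-normal. -/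
def IsNormalFun {G : Type*} [Mul G] (F : ℕ → Finset G) (x : G → Bool) : Prop :=
  ∀ K : Finset G, K.Nonempty → ∀ B : G → Bool,
    Tendsto
      (fun n => (((F n).filter (fun g => ∀ h ∈ K, x (h * g) = B h)).card : ℝ) / (F n).card)
      atTop (nhds ((1 / 2 : ℝ) ^ K.card))

open scoped Classical

/-- In an infinite cancellative semigroup, a Følner sequence has cards tending to infinity. -/
lemma folner_card_eventually_ge {G : Type*} [Semigroup G] [IsCancelMul G] [Infinite G]
    (F : ℕ → Finset G) (hF : IsFolner F) (k : ℕ) :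
    ∀ᶠ n in atTop, k ≤ (F n).card := by
  rcases Nat.eq_zero_or_pos k with hk | hk
  · simp [hk]
  obtain ⟨S, hS⟩ := Infinite.exists_subset_card_eq G k
  have hS0 : S.Nonempty := Finset.card_pos.mp (hS ▸ hk)
  have hev : ∀ᶠ n in atTop, ∀ g ∈ S,
      (1 - 1/(k:ℝ)) * (F n).card < ((F n).filter (fun h => g * h ∈ F n)).card := by
    rw [eventually_all_finset]
    intro g hg
    have h1 : (1 - 1/(k:ℝ)) < 1 := by
      have : 0 < 1/(k:ℝ) := by positivity
      linarith
    filter_upwards [(hF.2 g).eventually_const_lt h1] with n hn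
    have hc : (0:ℝ) < (F n).card := by
      exact_mod_cast Finset.card_pos.mpr (hF.1 n)
    exact (lt_div_iff₀ hc).mp hn
  filter_upwards [hev] with n hn
  have hc0 : 0 < (F n).card := Finset.card_pos.mpr (hF.1 n)
  by_cases hT : ((F n).filter (fun h => ∀ g ∈ S, g * h ∈ F n)).Nonempty
  · obtain ⟨h, hh⟩ := hT
    simp only [Finset.mem_filter] at hh
    have hinj : Set.InjOn (fun g => g * h) S := fun a _ b _ hab => mul_right_cancel hab
    calc k = S.card := hS.symm
      _ = (S.image (fun g => g * h)).card := (Finset.card_image_of_injOn hinj).symm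
      _ ≤ (F n).card := Finset.card_le_card (by
            intro y hy
            simp only [Finset.mem_image] at hy
            obtain ⟨g, hg, rfl⟩ := hy
            exact hh.2 g hg)
  · exfalso
    have hsub : F n ⊆ S.biUnion (fun g => (F n).filter (fun h => g * h ∉ F n)) := by
      intro h hh
      by_contra hmem
      simp only [Finset.mem_biUnion, Finset.mem_filter, not_exists, not_and] at hmem
      exact hT ⟨h, Finset.mem_filter.mpr ⟨hh, fun g hg => by
        by_contra hx
        exact hmem g hg hh hx⟩⟩
    have h1 : (F n).card ≤ ∑ g ∈ S, ((F n).filter (fun h => g * h ∉ F n)).card :=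
      le_trans (Finset.card_le_card hsub) Finset.card_biUnion_le
    have h2 : ∀ g ∈ S, (((F n).filter (fun h => g * h ∉ F n)).card : ℝ)
        < ((F n).card : ℝ) / k := by
      intro g hg
      have hkey := hn g hg
      have hsplit : ((F n).filter (fun h => g * h ∈ F n)).card
          + ((F n).filter (fun h => g * h ∉ F n)).card = (F n).card :=
        Finset.card_filter_add_card_filter_not _
      have hk' : (0:ℝ) < k := by exact_mod_cast hk
      have hcast : (((F n).filter (fun h => g * h ∈ F n)).card : ℝ)
          + (((F n).filter (fun h => g * h ∉ F n)).card : ℝ) = ((F n).card : ℝ) := by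
        exact_mod_cast congrArg (Nat.cast : ℕ → ℝ) hsplit
      have hexp : (1 - 1/(k:ℝ)) * (F n).card = (F n).card - ((F n).card : ℝ) / k := by
        field_simp
      rw [hexp] at hkey
      linarith
    have h3 : ((F n).card : ℝ) ≤ ∑ g ∈ S, (((F n).filter (fun h => g * h ∉ F n)).card : ℝ) := by
      exact_mod_cast h1
    have h4 := Finset.sum_lt_sum_of_nonempty hS0 h2
    have h5 : ∑ _g ∈ S, ((F n).card : ℝ) / k = ((F n).card : ℝ) := by
      rw [Finset.sum_const, hS]
      have hk' : (k:ℝ) ≠ 0 := by positivity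
      rw [nsmul_eq_mul]
      field_simp
    linarith

theorem normal_elements_meagre
    {G : Type*} [Semigroup G] [IsCancelMul G] [Countable G] [Infinite G]
    (F : ℕ → Finset G) (hF : IsFolner F) :
    IsMeagre {x : G → Bool | IsNormalFun F x} := by
  obtain ⟨g₀⟩ : Nonempty G := inferInstance
  set f : ℕ → (G → Bool) → ℝ := fun n x =>
    (((F n).filter (fun g => x (g₀ * g) = true)).card : ℝ) / (F n).card with hfdef
  set C : ℕ → Set (G → Bool) := fun m => {x | ∀ n, m ≤ n → f n x ≤ 3/4} with hCdef
  -- continuity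
  have hcont : ∀ n, Continuous (f n) := by
    intro n
    apply Continuous.div_const
    have heq : (fun x : G → Bool => (((F n).filter (fun g => x (g₀ * g) = true)).card : ℝ))
        = fun x => ∑ g ∈ F n, (if x (g₀ * g) = true then (1:ℝ) else 0) := by
      funext x
      rw [Finset.card_filter]
      push_cast
      rfl
    rw [heq]
    exact continuous_finset_sum _ fun g _ =>
      (continuous_of_discreteTopology (f := fun b : Bool => if b = true then (1:ℝ) else 0)).comp
        (continuous_apply (g₀ * g))
  -- closedness
  have hclosed : ∀ m, IsClosed (C m) := by
    intro m
    have : C m = ⋂ n, ⋂ (_ : m ≤ n), {x | f n x ≤ 3/4} := by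
      ext x; simp [hCdef]
    rw [this]
    exact isClosed_iInter fun n => isClosed_iInter fun _ =>
      isClosed_le (hcont n) continuous_const
  -- empty interior
  have hint : ∀ m, interior (C m) = ∅ := by
    intro m
    by_contra hne
    obtain ⟨x, hx⟩ := Set.nonempty_iff_ne_empty.mpr hne
    obtain ⟨I, u, hu, hsub⟩ := isOpen_pi_iff.mp isOpen_interior x hx
    set y : G → Bool := fun i => if i ∈ I then x i else true with hy
    have hyC : y ∈ C m := by
      apply interior_subset (hsub ?_)
      intro i hi
      simp only [hy, Set.mem_setOf_eq]
      rw [if_pos (Finset.mem_coe.mp hi)]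
      exact (hu i (Finset.mem_coe.mp hi)).2
    obtain ⟨n, hnc, hnm⟩ :=
      ((folner_card_eventually_ge F hF (4 * I.card + 1)).and (eventually_ge_atTop m)).exists
    have hc0 : 0 < (F n).card := Finset.card_pos.mpr (hF.1 n)
    -- bound the number of bad g's
    have hBsub : (F n).filter (fun g => ¬ (y (g₀ * g) = true))
        ⊆ (F n).filter (fun g => g₀ * g ∈ I) := by
      intro g hg
      simp only [Finset.mem_filter] at hg ⊢
      refine ⟨hg.1, ?_⟩
      by_contra hgI
      exact hg.2 (by simp [hy, hgI])
    have hBcard : ((F n).filter (fun g => ¬ (y (g₀ * g) = true))).card ≤ I.card := by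
      refine le_trans (Finset.card_le_card hBsub) ?_
      apply Finset.card_le_card_of_injOn (fun g => g₀ * g)
      · intro g hg
        exact (Finset.mem_filter.mp hg).2
      · intro a _ b _ hab
        exact mul_left_cancel hab
    have hsplit : ((F n).filter (fun g => y (g₀ * g) = true)).card
        + ((F n).filter (fun g => ¬ (y (g₀ * g) = true))).card = (F n).card :=
      Finset.card_filter_add_card_filter_not _
    have hfn : 3/4 < f n y := by
      have hc : (0:ℝ) < (F n).card := by exact_mod_cast hc0
      rw [hfdef]
      simp only
      rw [lt_div_iff₀ hc]
      have h1 : (((F n).filter (fun g => y (g₀ * g) = true)).card : ℝ)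
          = ((F n).card : ℝ) - (((F n).filter (fun g => ¬ (y (g₀ * g) = true))).card : ℝ) := by
        have := congrArg (Nat.cast : ℕ → ℝ) hsplit
        push_cast at this
        linarith
      have h2 : (((F n).filter (fun g => ¬ (y (g₀ * g) = true))).card : ℝ) ≤ (I.card : ℝ) := by
        exact_mod_cast hBcard
      have h3 : (4 * I.card + 1 : ℝ) ≤ ((F n).card : ℝ) := by exact_mod_cast hnc
      rw [h1]
      linarith
    exact absurd (hyC n hnm) (not_le.mpr hfn)
  -- nowhere dense, meagre
  have hmeagre : ∀ m, IsMeagre (C m) := by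
    intro m
    rw [isMeagre_iff_countable_union_isNowhereDense]
    refine ⟨{C m}, ?_, Set.countable_singleton _, by simp⟩
    intro t ht
    rw [Set.mem_singleton_iff] at ht
    subst ht
    exact (hclosed m).isNowhereDense_iff.mpr (hint m)
  refine (isMeagre_iUnion hmeagre).mono ?_
  intro x hx
  have hnorm : IsNormalFun F x := hx
  have h := hnorm {g₀} (Finset.singleton_nonempty g₀) (fun _ => true)
  have heq : (fun n => (((F n).filter (fun g => ∀ h ∈ ({g₀} : Finset G), x (h * g) = true)).card : ℝ)
      / (F n).card) = fun n => f n x := by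
    funext n
    simp [hfdef]
  rw [heq, Finset.card_singleton, pow_one] at h
  have hev : ∀ᶠ n in atTop, f n x ≤ 3/4 := by
    filter_upwards [h.eventually_lt_const (by norm_num : (1/2:ℝ) < 3/4)] with n hn
    exact le_of_lt hn
  obtain ⟨m, hm⟩ := eventually_atTop.mp hev
  exact Set.mem_iUnion.mpr ⟨m, hm⟩
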